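/- Let $\mathfrak{g}$ be a filiform Lie algebra of dimension $n$ over a field of characteristic zero. Then there exists a basis $e_1,e_2,\dots,e_n$ of $\mathfrak{g}$ such that $[e_1,e_i]=e_{i+1}$ for $i=2,\dots,n-1$. -/

import Mathlib

open Module Submodule LieModule

/-- Auxiliary submodule: elements `y` with `⁅y, A⁆ ⊆ B`. -/
def vergneU (K : Type*) {L : Type*} [Field K] [LieRing L] [LieAlgebra K L]
    (A B : Submodule K L) : Submodule K L where
  carrier := {y | ∀ m ∈ A, ⁅y, m⁆ ∈ B}
  add_mem' := fun ha hb m hm => by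
    rw [add_lie]; exact B.add_mem (ha m hm) (hb m hm)
  zero_mem' := fun m hm => by simp
  smul_mem' := fun c y hy m hm => by
    rw [smul_lie]; exact B.smul_mem c (hy m hm)

theorem mem_vergneU {K L : Type*} [Field K] [LieRing L] [LieAlgebra K L]
    {A B : Submodule K L} {y : L} : y ∈ vergneU K A B ↔ ∀ m ∈ A, ⁅y, m⁆ ∈ B := Iff.rfl

/-- Auxiliary sequence: `x, e₁, ⁅x,e₁⁆, ⁅x,⁅x,e₁⁆⁆, …`. -/
noncomputable def vergneSeq {L : Type*} [LieRing L] (x e1 : L) : ℕ → L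
  | 0 => x
  | 1 => e1
  | (i + 2) => ⁅x, vergneSeq x e1 (i + 1)⁆

/-- Vergne's adapted basis lemma.  Let `𝔤` be a filiform Lie
algebra of dimension `n` over a field of characteristic zero, i.e. a nilpotent
Lie algebra with `C^{n-1} 𝔤 ≠ 0` and `C^n 𝔤 = 0` (where
`C^k 𝔤 = LieModule.lowerCentralSeries K L L (k-1)`).  Then there is a basis
`e₁, …, eₙ` (indexed here by `0, …, n-1`) with `[e₁, eᵢ] = e_{i+1}` for
`i = 2, …, n-1`. -/
theorem stmt5 (K L : Type*) [Field K] [CharZero K] [LieRing L] [LieAlgebra K L]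
    [FiniteDimensional K L] (n : ℕ)
    (hn : Module.finrank K L = n)
    (hfil1 : LieModule.lowerCentralSeries K L L (n - 2) ≠ ⊥)
    (hfil2 : LieModule.lowerCentralSeries K L L (n - 1) = ⊥) :
    ∃ e : Basis (Fin n) K L, ∀ i : ℕ, ∀ h : 1 ≤ i ∧ i + 1 ≤ n - 1,
      ⁅e ⟨0, by omega⟩, e ⟨i, by omega⟩⁆ = e ⟨i + 1, by omega⟩ := by
  -- dispatch small `n`
  rcases le_or_gt n 1 with h1 | h1
  · exfalso
    have he : n - 2 = n - 1 := by omega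
    rw [he] at hfil1
    exact hfil1 hfil2
  rcases eq_or_lt_of_le (Nat.succ_le_of_lt h1) with h2 | h2
  · -- n = 2 : vacuous bracket condition
    refine ⟨Module.finBasisOfFinrankEq K L hn, fun i hi => ?_⟩
    exact absurd hi (by omega)
  have hn3 : 3 ≤ n := h2
  clear h1 h2
  -- notation
  set N : ℕ → Submodule K L := fun k => LieSubmodule.toSubmodule (LieModule.lowerCentralSeries K L L k) with hNdef
  have hmemN : ∀ k (y : L), y ∈ N k ↔ y ∈ LieModule.lowerCentralSeries K L L k :=
    fun _ _ => Iff.rfl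
  have hN0 : N 0 = ⊤ := by
    simp only [hNdef, LieModule.lowerCentralSeries_zero, LieSubmodule.top_toSubmodule]
  have hNlast : N (n - 1) = ⊥ := by
    simp only [hNdef, hfil2, LieSubmodule.bot_toSubmodule]
  -- basic bracket membership
  have hbrN : ∀ k (y m : L), m ∈ N k → ⁅y, m⁆ ∈ N (k + 1) := by
    intro k y m hm
    rw [hmemN]
    rw [show lowerCentralSeries K L L (k+1) = ⁅(⊤ : LieIdeal K L), lowerCentralSeries K L L k⁆
      from LieModule.lowerCentralSeries_succ K L L k]
    exact LieSubmodule.lie_mem_lie (LieSubmodule.mem_top y) ((hmemN k m).mp hm)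
  have hbrN' : ∀ k (y m : L), m ∈ N k → ⁅m, y⁆ ∈ N (k + 1) := by
    intro k y m hm
    rw [← lie_skew]
    exact (N (k+1)).neg_mem (hbrN k y m hm)
  -- stabilization of the lower central series
  have hstab : ∀ k, lowerCentralSeries K L L (k + 1) = lowerCentralSeries K L L k →
      ∀ j, k ≤ j → lowerCentralSeries K L L j = lowerCentralSeries K L L k := by
    intro k hk j hj
    induction j, hj using Nat.le_induction with
    | base => rfl
    | succ j hj ih =>
      rw [LieModule.lowerCentralSeries_succ, ih, ← LieModule.lowerCentralSeries_succ, hk]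
  -- strictness
  have hstrict : ∀ k, k ≤ n - 2 →
      lowerCentralSeries K L L (k + 1) < lowerCentralSeries K L L k := by
    intro k hk
    rcases lt_or_eq_of_le (antitone_lowerCentralSeries K L L (Nat.le_succ k)) with h | h
    · exact h
    · exfalso
      have e1 := hstab k h (n - 2) (by omega)
      have e2 := hstab k h (n - 1) (by omega)
      rw [hfil2] at e2
      exact hfil1 (e1.trans e2.symm)
  have hstrictN : ∀ k, k ≤ n - 2 → N (k + 1) < N k := by
    intro k hk
    refine lt_of_le_of_ne ?_ ?_
    · exact (LieSubmodule.toSubmodule_le_toSubmodule _ _).mpr (hstrict k hk).le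
    · intro he
      exact (hstrict k hk).ne ((LieSubmodule.toSubmodule_inj _ _).mp he)
  -- dimensions
  set d : ℕ → ℕ := fun k => finrank K (N k) with hddef
  have hd0 : d 0 = n := by
    show finrank K (N 0) = n
    have h1 := Submodule.finrank_le (N 0)
    have h2 : finrank K (⊤ : Submodule K L) ≤ finrank K (N 0) := Submodule.finrank_mono hN0.ge
    rw [finrank_top] at h2
    omega
  have hdlast : d (n - 1) = 0 := by
    show finrank K (N (n - 1)) = 0
    have h2 : finrank K (N (n - 1)) ≤ finrank K (⊥ : Submodule K L) :=
      Submodule.finrank_mono hNlast.le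
    rw [finrank_bot] at h2
    omega
  have hd_lt : ∀ k, k ≤ n - 2 → d (k + 1) < d k :=
    fun k hk => Submodule.finrank_lt_finrank_of_lt (hstrictN k hk)
  have hd_ge_aux : ∀ j, j ≤ n - 1 → j ≤ d (n - 1 - j) := by
    intro j
    induction j with
    | zero => omega
    | succ j ih =>
      intro hj
      have h1 := ih (by omega)
      have h2 : n - 1 - (j + 1) + 1 = n - 1 - j := by omega
      have h3 := hd_lt (n - 1 - (j + 1)) (by omega)
      rw [h2] at h3
      omega
  have hd_ge : ∀ k, k ≤ n - 1 → n - 1 - k ≤ d k := by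
    intro k hk
    have := hd_ge_aux (n - 1 - k) (by omega)
    rwa [show n - 1 - (n - 1 - k) = k by omega] at this
  -- d 1 ≤ n - 2 : the derived algebra has codimension ≥ 2
  have hbr2 : ∀ (y m : L), m ∈ N 1 → ⁅y, m⁆ ∈ N 2 := fun y m hm => hbrN 1 y m hm
  have hd1 : d 1 ≤ n - 2 := by
    by_contra hc
    push_neg at hc
    have hd1n : d 1 = n - 1 := by
      have h1 := hd_lt 0 (by omega)
      rw [Nat.zero_add] at h1
      have h2 := hd_ge 1 (by omega)
      omega
    have hNne : N 1 ≠ ⊤ := by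
      intro he
      have h2 : finrank K (⊤ : Submodule K L) ≤ finrank K (N 1) := Submodule.finrank_mono he.ge
      rw [finrank_top, hn] at h2
      have hb : d 1 = finrank K (N 1) := rfl
      omega
    obtain ⟨x, hx⟩ : ∃ x, x ∉ N 1 := by
      by_contra h
      push_neg at h
      exact hNne (Submodule.eq_top_iff'.mpr h)
    have hT : (K ∙ x) ⊔ N 1 = ⊤ := by
      apply Submodule.eq_top_of_finrank_eq
      have hlt : N 1 < (K ∙ x) ⊔ N 1 :=
        lt_of_le_of_ne le_sup_right
          (fun e => hx (e ▸ Submodule.mem_sup_left (Submodule.mem_span_singleton_self x)))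
      have h4 := Submodule.finrank_lt_finrank_of_lt hlt
      have h5 := Submodule.finrank_le ((K ∙ x) ⊔ N 1)
      have hb : d 1 = finrank K (N 1) := rfl
      rw [hn]
      omega
    have hle : LieModule.lowerCentralSeries K L L 1 ≤ LieModule.lowerCentralSeries K L L 2 := by
      conv_lhs => rw [show (1 : ℕ) = 0 + 1 from rfl, LieModule.lowerCentralSeries_succ]
      rw [LieSubmodule.lie_le_iff]
      intro a _ b _
      have ha : a ∈ (K ∙ x) ⊔ N 1 := hT.symm ▸ Submodule.mem_top
      have hb : b ∈ (K ∙ x) ⊔ N 1 := hT.symm ▸ Submodule.mem_top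
      obtain ⟨y, hy, m, hm, rfl⟩ := Submodule.mem_sup.mp ha
      obtain ⟨y', hy', m', hm', rfl⟩ := Submodule.mem_sup.mp hb
      obtain ⟨c, rfl⟩ := Submodule.mem_span_singleton.mp hy
      obtain ⟨c', rfl⟩ := Submodule.mem_span_singleton.mp hy'
      rw [← hmemN]
      rw [add_lie]
      refine (N 2).add_mem ?_ (hbrN' 1 (c' • x + m') m hm)
      rw [smul_lie]
      refine (N 2).smul_mem c ?_
      rw [lie_add, lie_smul, lie_self, smul_zero, zero_add]
      exact hbr2 x m' hm'
    exact (hstrict 1 (by omega)).not_ge hle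
  -- exact dimensions
  have hd_le : ∀ k, 1 ≤ k → k ≤ n - 1 → d k ≤ n - 1 - k := by
    intro k
    induction k with
    | zero => omega
    | succ k ih =>
      intro _ hk
      rcases Nat.eq_zero_or_pos k with rfl | hk1
      · simpa [Nat.sub_sub] using hd1
      · have := ih (by omega) (by omega)
        have := hd_lt k (by omega)
        omega
  have hdex : ∀ k, 1 ≤ k → k ≤ n - 1 → d k = n - 1 - k := by
    intro k h1 h2
    have := hd_ge k (by omega)
    have := hd_le k h1 h2
    omega
  -- the subspaces to avoid are proper
  have hUne : ∀ k, k + 3 ≤ n → vergneU K (N k) (N (k + 2)) ≠ ⊤ := by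
    intro k hk he
    have hle : lowerCentralSeries K L L (k + 1) ≤ lowerCentralSeries K L L (k + 2) := by
      conv_lhs => rw [LieModule.lowerCentralSeries_succ]
      rw [LieSubmodule.lie_le_iff]
      intro y _ m hm
      have hy : y ∈ vergneU K (N k) (N (k + 2)) := he.symm ▸ Submodule.mem_top
      exact (hmemN _ _).mp (hy m ((hmemN k m).mpr hm))
    exact (hstrict (k + 1) (by omega)).not_ge hle
  -- choose x avoiding all of them
  obtain ⟨x, hx⟩ : ∃ x : L, ∀ k, k + 3 ≤ n → x ∉ vergneU K (N k) (N (k + 2)) := by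
    classical
    set s : Finset (Submodule K L) :=
      (Finset.range (n - 2)).image (fun k => vergneU K (N k) (N (k + 2))) with hs
    have hts : ⊤ ∉ s := by
      rw [hs, Finset.mem_image]
      rintro ⟨k, hk, he⟩
      rw [Finset.mem_range] at hk
      exact hUne k (by omega) he
    have hne := Subspace.biUnion_ne_univ_of_top_notMem hts
    rw [Ne, Set.eq_univ_iff_forall] at hne
    push_neg at hne
    obtain ⟨x, hxx⟩ := hne
    refine ⟨x, fun k hk hmem => ?_⟩
    refine hxx ?_
    refine Set.mem_biUnion ?_ hmem
    rw [hs]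
    exact Finset.mem_coe.mpr (Finset.mem_image_of_mem _ (Finset.mem_range.mpr (by omega)))
  -- x is not in the derived algebra
  have hxN1 : x ∉ N 1 := by
    intro hx1
    refine hx 0 (by omega) ?_
    intro m _
    rw [show (2 : ℕ) = 1 + 1 from rfl]
    exact hbrN' 1 m x hx1
  -- choose e1 with ⁅x, e1⁆ ∉ N 2
  obtain ⟨e1, he1⟩ : ∃ e1 : L, ⁅x, e1⁆ ∉ N 2 := by
    have h0 := hx 0 (by omega)
    rw [mem_vergneU] at h0
    push_neg at h0
    obtain ⟨m, _, hm2⟩ := h0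
    exact ⟨m, hm2⟩
  -- e1 is independent of x modulo N 1
  have he1x : e1 ∉ (K ∙ x) ⊔ N 1 := by
    intro hmem
    obtain ⟨y, hy, m, hm, he⟩ := Submodule.mem_sup.mp hmem
    obtain ⟨c, rfl⟩ := Submodule.mem_span_singleton.mp hy
    apply he1
    rw [← he, lie_add, lie_smul, lie_self, smul_zero, zero_add]
    exact hbr2 x m hm
  have he1N1 : e1 ∉ N 1 := fun h => he1x (Submodule.mem_sup_right h)
  -- the sequence
  set f : ℕ → L := vergneSeq x e1 with hfdef
  have hf0 : f 0 = x := rfl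
  have hf1 : f 1 = e1 := rfl
  have hfs : ∀ i, 1 ≤ i → f (i + 1) = ⁅x, f i⁆ := by
    intro i hi
    obtain ⟨j, rfl⟩ : ∃ j, i = j + 1 := ⟨i - 1, by omega⟩
    rfl
  -- chain invariant
  have hchain : ∀ i, 1 ≤ i → i ≤ n - 1 → f i ∈ N (i - 1) ∧ f i ∉ N i := by
    intro i
    induction i with
    | zero => omega
    | succ i ih =>
      intro _ hi
      rcases Nat.eq_zero_or_pos i with rfl | hi1
      · -- i + 1 = 1
        refine ⟨by rw [hN0]; trivial, ?_⟩
        intro h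
        exact he1N1 (by simpa [hf1] using h)
      have ⟨hmem, hnmem⟩ := ih hi1 (by omega)
      have hfi1 : f (i + 1) = ⁅x, f i⁆ := hfs i hi1
      have hmem1 : f (i + 1) ∈ N i := by
        rw [hfi1]
        have := hbrN (i - 1) x (f i) hmem
        rwa [show i - 1 + 1 = i by omega] at this
      refine ⟨by rwa [show i + 1 - 1 = i from rfl], ?_⟩
      -- show f (i+1) ∉ N (i+1)
      rcases Nat.eq_or_lt_of_le hi1 with rfl | hi2
      · -- i = 1
        intro h
        exact he1 (by simpa [hfi1, hf1] using h)
      -- i ≥ 2 : use x ∉ U (i-1) and codimension-one structure of N (i-1) over N i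
      have hcod : N (i - 1) = (K ∙ f i) ⊔ N i := by
        symm
        apply Submodule.eq_of_le_of_finrank_le
        · refine sup_le ?_ ((LieSubmodule.toSubmodule_le_toSubmodule _ _).mpr
            (antitone_lowerCentralSeries K L L (by omega)))
          rw [Submodule.span_singleton_le_iff_mem]
          exact hmem
        · have hlt : N i < (K ∙ f i) ⊔ N i :=
            lt_of_le_of_ne le_sup_right (fun e => hnmem
              (e ▸ Submodule.mem_sup_left (Submodule.mem_span_singleton_self (f i))))
          have h4 := Submodule.finrank_lt_finrank_of_lt hlt
          have h5 : d (i - 1) = n - 1 - (i - 1) := hdex (i - 1) (by omega) (by omega)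
          have h6 : d i = n - 1 - i := hdex i (by omega) (by omega)
          have h7 : finrank K ((K ∙ f i) ⊔ N i : Submodule K L) ≤ d (i - 1) := by
            apply Submodule.finrank_mono
            refine sup_le ?_ ((LieSubmodule.toSubmodule_le_toSubmodule _ _).mpr
              (antitone_lowerCentralSeries K L L (by omega)))
            rw [Submodule.span_singleton_le_iff_mem]
            exact hmem
          have hb1 : d i = finrank K (N i) := rfl
          have hb2 : d (i - 1) = finrank K (N (i - 1)) := rfl
          omega
      have hxU := hx (i - 1) (by omega)
      rw [mem_vergneU] at hxU
      push_neg at hxU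
      obtain ⟨m, hm, hm2⟩ := hxU
      rw [show i - 1 + 2 = i + 1 by omega] at hm2
      rw [hcod] at hm
      obtain ⟨y, hy, m', hm', rfl⟩ := Submodule.mem_sup.mp hm
      obtain ⟨c, rfl⟩ := Submodule.mem_span_singleton.mp hy
      intro hcon
      apply hm2
      rw [lie_add, lie_smul]
      refine (N (i + 1)).add_mem ((N (i + 1)).smul_mem c ?_) (hbrN i x m' hm')
      rwa [← hfi1]
  -- codimension-one decomposition for the spanning argument
  have hcod1 : ∀ k, 1 ≤ k → k ≤ n - 2 → N k = (K ∙ f (k + 1)) ⊔ N (k + 1) := by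
    intro k h1 h2
    have ⟨hmem, hnmem⟩ := hchain (k + 1) (by omega) (by omega)
    rw [show k + 1 - 1 = k from rfl] at hmem
    symm
    apply Submodule.eq_of_le_of_finrank_le
    · refine sup_le ?_ ((LieSubmodule.toSubmodule_le_toSubmodule _ _).mpr
        (antitone_lowerCentralSeries K L L (by omega)))
      rw [Submodule.span_singleton_le_iff_mem]
      exact hmem
    · have hlt : N (k + 1) < (K ∙ f (k + 1)) ⊔ N (k + 1) :=
        lt_of_le_of_ne le_sup_right (fun e => hnmem
          (e ▸ Submodule.mem_sup_left (Submodule.mem_span_singleton_self (f (k + 1)))))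
      have h4 := Submodule.finrank_lt_finrank_of_lt hlt
      have h5 : d k = n - 1 - k := hdex k h1 (by omega)
      have h6 : d (k + 1) = n - 1 - (k + 1) := hdex (k + 1) (by omega) (by omega)
      have hb1 : d k = finrank K (N k) := rfl
      have hb2 : d (k + 1) = finrank K (N (k + 1)) := rfl
      omega
  -- spanning
  set S : Submodule K L := Submodule.span K (Set.range fun t : Fin n => f t) with hSdef
  have hfS : ∀ i, i < n → f i ∈ S := by
    intro i hi
    apply Submodule.subset_span
    exact ⟨⟨i, hi⟩, rfl⟩
  have hNS : ∀ j, j ≤ n - 2 → N (n - 1 - j) ≤ S := by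
    intro j
    induction j with
    | zero =>
      intro _
      rw [Nat.sub_zero, hNlast]
      exact bot_le
    | succ j ih =>
      intro hj
      have hk1 : 1 ≤ n - 1 - (j + 1) := by omega
      have hk2 : n - 1 - (j + 1) ≤ n - 2 := by omega
      rw [hcod1 _ hk1 hk2]
      refine sup_le ?_ ?_
      · rw [Submodule.span_singleton_le_iff_mem]
        exact hfS _ (by omega)
      · have : n - 1 - (j + 1) + 1 = n - 1 - j := by omega
        rw [this]
        exact ih (by omega)
  have hN1S : N 1 ≤ S := by
    have := hNS (n - 2) (le_refl _)
    rwa [show n - 1 - (n - 2) = 1 by omega] at this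
  have htop : ⊤ ≤ S := by
    have hTT : (K ∙ e1) ⊔ ((K ∙ x) ⊔ N 1) = ⊤ := by
      apply Submodule.eq_top_of_finrank_eq
      have hlt1 : N 1 < (K ∙ x) ⊔ N 1 :=
        lt_of_le_of_ne le_sup_right
          (fun e => hxN1 (e ▸ Submodule.mem_sup_left (Submodule.mem_span_singleton_self x)))
      have hlt2 : (K ∙ x) ⊔ N 1 < (K ∙ e1) ⊔ ((K ∙ x) ⊔ N 1) :=
        lt_of_le_of_ne le_sup_right
          (fun e => he1x (e ▸ Submodule.mem_sup_left (Submodule.mem_span_singleton_self e1)))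
      have h4 := Submodule.finrank_lt_finrank_of_lt hlt1
      have h5 := Submodule.finrank_lt_finrank_of_lt hlt2
      have h6 := Submodule.finrank_le ((K ∙ e1) ⊔ ((K ∙ x) ⊔ N 1))
      have h7 : d 1 = n - 2 := by
        have := hdex 1 (by omega) (by omega)
        omega
      have hb1 : d 1 = finrank K (N 1) := rfl
      rw [hn]
      omega
    rw [← hTT]
    refine sup_le ?_ (sup_le ?_ hN1S)
    · rw [Submodule.span_singleton_le_iff_mem]
      exact hf1 ▸ hfS 1 (by omega)
    · rw [Submodule.span_singleton_le_iff_mem]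
      exact hf0 ▸ hfS 0 (by omega)
  -- build the basis
  have hcard : Fintype.card (Fin n) = finrank K L := by simp [hn]
  refine ⟨basisOfTopLeSpanOfCardEqFinrank (fun t : Fin n => f t) htop hcard, ?_⟩
  intro i hi
  rw [coe_basisOfTopLeSpanOfCardEqFinrank]
  show ⁅f 0, f i⁆ = f (i + 1)
  rw [hf0, hfs i hi.1]
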